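/- Let S = {1,...,n} be a finite state space, P an irreducible stochastic matrix on S with stationary distribution π* (all entries positive), and Π* the n×n matrix with every row equal to π*. Then for any b : S → ℝ with Σ_i π*(i) b(i) = 0, the equation (P + Π* - I)g = b has a solution g : S → ℝ. -/
import Mathlib


open Finset

theorem stmt_11 (n : ℕ) (hn : 0 < n)
    (P : Matrix (Fin n) (Fin n) ℝ)
    (hPnonneg : ∀ i j, 0 ≤ P i j) (hProw : ∀ i, ∑ j, P i j = 1)
    (hirr : ∀ i j : Fin n, ∃ m : ℕ, 1 ≤ m ∧ 0 < (P ^ m) i j)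
    (π : Fin n → ℝ) (hπpos : ∀ i, 0 < π i) (hπsum : ∑ i, π i = 1)
    (hstat : Matrix.vecMul π P = π)
    (Pis : Matrix (Fin n) (Fin n) ℝ) (hPis : Pis = Matrix.of fun _ j => π j)
    (b : Fin n → ℝ) (hb : ∑ i, π i * b i = 0) :
    ∃ g : Fin n → ℝ, Matrix.mulVec (P + Pis - 1) g = b := by
  set M : Matrix (Fin n) (Fin n) ℝ := P + Pis - 1 with hM
  -- powers of P are nonnegative with row sums 1
  have hpow_nonneg : ∀ m i j, 0 ≤ (P ^ m) i j := by
    intro m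
    induction m with
    | zero => intro i j
              simp [Matrix.one_apply]
              split <;> norm_num
    | succ m ih =>
        intro i j
        rw [pow_succ, Matrix.mul_apply]
        exact Finset.sum_nonneg fun k _ => mul_nonneg (ih i k) (hPnonneg k j)
  have hpow_row : ∀ m i, ∑ j, (P ^ m) i j = 1 := by
    intro m
    induction m with
    | zero => intro i; simp [Matrix.one_apply]
    | succ m ih =>
        intro i
        simp only [pow_succ, Matrix.mul_apply]
        rw [Finset.sum_comm]
        calc ∑ k, ∑ j, (P ^ m) i k * P k j
            = ∑ k, (P ^ m) i k * ∑ j, P k j := by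
              simp [Finset.mul_sum]
          _ = 1 := by simp [hProw, ih]
  -- kernel is trivial
  have hker : ∀ g : Fin n → ℝ, M.mulVec g = 0 → g = 0 := by
    intro g hg
    have hexp : M.mulVec g = P.mulVec g + Pis.mulVec g - g := by
      rw [hM, Matrix.sub_mulVec, Matrix.add_mulVec, Matrix.one_mulVec]
    have hg' : ∀ i, (∑ j, P i j * g j) + (∑ j, π j * g j) - g i = 0 := by
      intro i
      have h := congrFun hg i
      rw [hexp] at h
      simpa [hPis, Matrix.mulVec, dotProduct] using h
    set c : ℝ := ∑ j, π j * g j with hc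
    -- c = 0
    have hc0 : c = 0 := by
      have h1 : ∑ i, π i * ((∑ j, P i j * g j) + c - g i) = 0 := by
        simp only [hg', mul_zero, Finset.sum_const_zero]
      have h2 : ∑ i, π i * (∑ j, P i j * g j) = c := by
        calc ∑ i, π i * (∑ j, P i j * g j)
            = ∑ i, ∑ j, π i * P i j * g j := by
              simp [Finset.mul_sum, mul_assoc]
          _ = ∑ j, (∑ i, π i * P i j) * g j := by
              rw [Finset.sum_comm]; simp [Finset.sum_mul]
          _ = ∑ j, π j * g j := by
              refine Finset.sum_congr rfl fun j _ => ?_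
              have := congrFun hstat j
              simp only [Matrix.vecMul, dotProduct] at this
              rw [this]
          _ = c := rfl
      have h3 : ∑ i, π i * ((∑ j, P i j * g j) + c - g i)
          = c + c - c := by
        have e : ∀ i ∈ Finset.univ, π i * ((∑ j, P i j * g j) + c - g i)
            = π i * (∑ j, P i j * g j) + π i * c - π i * g i := fun i _ => by ring
        rw [Finset.sum_congr rfl e, Finset.sum_sub_distrib, Finset.sum_add_distrib, h2,
          ← Finset.sum_mul, hπsum, one_mul, ← hc]
      rw [h3] at h1; linarith
    -- so g is harmonic: P g = g
    have hharm : ∀ i, ∑ j, P i j * g j = g i := by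
      intro i
      have h := hg' i
      rw [hc0] at h
      linarith
    have hharm_pow : ∀ m i, ∑ j, (P ^ m) i j * g j = g i := by
      intro m
      induction m with
      | zero => intro i; simp [Matrix.one_apply]
      | succ m ih =>
          intro i
          simp only [pow_succ, Matrix.mul_apply, Finset.sum_mul]
          rw [Finset.sum_comm]
          calc ∑ k, ∑ j, (P ^ m) i k * P k j * g j
              = ∑ k, (P ^ m) i k * ∑ j, P k j * g j := by
                simp [Finset.mul_sum, mul_assoc]
            _ = ∑ k, (P ^ m) i k * g k := by simp [hharm]
            _ = g i := ih i
    -- maximum principle: g is constant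
    haveI : Nonempty (Fin n) := ⟨⟨0, hn⟩⟩
    obtain ⟨i0, _, hmax⟩ := Finset.exists_max_image Finset.univ g ⟨⟨0, hn⟩, Finset.mem_univ _⟩
    have hconst : ∀ j, g j = g i0 := by
      intro j
      obtain ⟨m, _, hmpos⟩ := hirr i0 j
      have hsum0 : ∑ k, (P ^ m) i0 k * (g i0 - g k) = 0 := by
        have e : ∀ k ∈ Finset.univ, (P ^ m) i0 k * (g i0 - g k)
            = (P ^ m) i0 k * g i0 - (P ^ m) i0 k * g k := fun k _ => by ring
        rw [Finset.sum_congr rfl e, Finset.sum_sub_distrib, ← Finset.sum_mul, hpow_row,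
          hharm_pow, one_mul, sub_self]
      have hterm : ∀ k ∈ Finset.univ, 0 ≤ (P ^ m) i0 k * (g i0 - g k) :=
        fun k _ => mul_nonneg (hpow_nonneg m i0 k)
          (sub_nonneg.mpr (hmax k (Finset.mem_univ k)))
      have := (Finset.sum_eq_zero_iff_of_nonneg hterm).mp hsum0 j (Finset.mem_univ j)
      have : g i0 - g j = 0 := by
        rcases mul_eq_zero.mp this with h | h
        · exact absurd h (ne_of_gt hmpos)
        · exact h
      linarith
    -- g i0 = 0 from c = 0
    have : g i0 = 0 := by
      have : c = ∑ j, π j * g i0 := by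
        rw [hc]; exact Finset.sum_congr rfl fun j _ => by rw [hconst j]
      rw [hc0] at this
      rw [← Finset.sum_mul, hπsum, one_mul] at this
      linarith
    funext j
    simp [hconst j, this]
  -- hence mulVecLin M is injective, so surjective
  have hinj : Function.Injective M.mulVecLin := by
    rw [← LinearMap.ker_eq_bot]
    rw [LinearMap.ker_eq_bot']
    intro g hg
    exact hker g hg
  have hsurj : Function.Surjective M.mulVecLin :=
    (LinearMap.injective_iff_surjective).mp hinj
  obtain ⟨g, hgb⟩ := hsurj b
  exact ⟨g, hgb⟩
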